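/- arXiv:2205.12801 — 6 statements merged into one kernel-verified Lean document; each statement's English description precedes it below -/
import Mathlib

section
/- Let Z be a subring of ℂ that is discrete (as a subset of ℂ in the norm topology) and closed under complex conjugation. Let (a_n)_{n≥1} be a sequence with a_n ∈ Z for all n, let x₀ ∈ ℂ, and define the forward orbit x_0 = x₀, x_{n+1} = (x_n)⁻¹ − a_{n+1}. Suppose that for every n ≥ 0 one has x_n ≠ 0 and ‖x_n‖ < 1. Then the continued fraction converges to x₀: the sequence of convergents c_n = P[a_1,…,a_n]·(Q[a_1,…,a_n])⁻¹ tends to x₀ as n → ∞. -/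
open Filter

/-- `(P l, Q l)` for a digit list `l = [a_i, …, a_n]`:
`P [] = 0`, `Q [] = 1`, `P (a :: l) = Q l`, `Q (a :: l) = a * Q l + P l`. -/
def cfPQ {k : Type*} [DivisionRing k] : List k → k × k
  | [] => (0, 1)
  | a :: l => ((cfPQ l).2, a * (cfPQ l).2 + (cfPQ l).1)

/-- The digit list `[a_i, a_{i+1}, …, a_n]`. -/
def suffList {k : Type*} (a : ℕ → k) (i n : ℕ) : List k :=
  (List.range (n + 1 - i)).map (fun j => a (i + j))

/-- Both columns of the matrix product `M(a_1)⋯M(a_n)` with `M(a) = [[0,1],[1,a]]`: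
the first component is `cfPQ l`, the second is the other column. -/
def cfM : List ℂ → (ℂ × ℂ) × (ℂ × ℂ)
  | [] => ((0, 1), (1, 0))
  | a :: l => (((cfM l).1.2, a * (cfM l).1.2 + (cfM l).1.1),
               ((cfM l).2.2, a * (cfM l).2.2 + (cfM l).2.1))

lemma cfM_fst (l : List ℂ) : (cfM l).1 = cfPQ l := by
  induction l with
  | nil => rfl
  | cons a l ih => simp [cfM, cfPQ, ih]

lemma cfM_det (l : List ℂ) :
    (cfM l).1.1 * (cfM l).2.2 - (cfM l).2.1 * (cfM l).1.2 = (-1) ^ (l.length + 1) := by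
  induction l with
  | nil => simp [cfM]
  | cons a l ih =>
    simp only [cfM, List.length_cons]
    rw [pow_succ]
    linear_combination (-1 : ℂ) * ih

lemma cfM_mem (Z : Subring ℂ) (l : List ℂ) (h : ∀ b ∈ l, b ∈ Z) :
    (cfM l).1.1 ∈ Z ∧ (cfM l).1.2 ∈ Z ∧ (cfM l).2.1 ∈ Z ∧ (cfM l).2.2 ∈ Z := by
  induction l with
  | nil => exact ⟨Z.zero_mem, Z.one_mem, Z.one_mem, Z.zero_mem⟩
  | cons a l ih =>
    have ha : a ∈ Z := h a List.mem_cons_self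
    obtain ⟨h1, h2, h3, h4⟩ := ih (fun b hb => h b (List.mem_cons_of_mem a hb))
    exact ⟨h2, Z.add_mem (Z.mul_mem ha h2) h1, h4, Z.add_mem (Z.mul_mem ha h4) h3⟩

/-- The digit list `[a_i, …, a_{i+m-1}]` of length `m`. -/
def digL (a : ℕ → ℂ) (i m : ℕ) : List ℂ := (List.range m).map fun j => a (i + j)

lemma digL_succ (a : ℕ → ℂ) (i m : ℕ) : digL a i (m + 1) = a i :: digL a (i + 1) m := by
  simp only [digL, List.range_succ_eq_map, List.map_cons, List.map_map, Nat.add_zero]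
  refine congrArg₂ _ rfl (List.map_congr_left fun j _ => ?_)
  simp only [Function.comp_apply]
  congr 1
  omega

/-- Theorem 1.2 of the paper for `k = ℂ`. -/
theorem complex_cf_convergence (Z : Subring ℂ) (hZdisc : DiscreteTopology Z)
    (hZconj : ∀ z ∈ Z, starRingEnd ℂ z ∈ Z)
    (a : ℕ → ℂ) (ha : ∀ n, 1 ≤ n → a n ∈ Z)
    (x₀ : ℂ) (x : ℕ → ℂ) (hx0 : x 0 = x₀)
    (hstep : ∀ n, x (n + 1) = (x n)⁻¹ - a (n + 1))
    (hne : ∀ n, x n ≠ 0) (hlt : ∀ n, ‖x n‖ < 1) :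
    Tendsto (fun n => (cfPQ (suffList a 1 n)).1 * ((cfPQ (suffList a 1 n)).2)⁻¹)
      atTop (nhds x₀) := by
  -- basic inverse relation
  have hxinv : ∀ j, x j * (a (j + 1) + x (j + 1)) = 1 := by
    intro j
    have h : a (j + 1) + ((x j)⁻¹ - a (j + 1)) = (x j)⁻¹ := by ring
    rw [hstep j, h]
    exact mul_inv_cancel₀ (hne j)
  -- key identity 1 : x_{j} * (Q + x_{j+m} Q') = P + x_{j+m} P'  for digits a_{j+1} … a_{j+m}
  have key1 : ∀ m j,
      x j * ((cfM (digL a (j + 1) m)).1.2 + x (j + m) * (cfM (digL a (j + 1) m)).2.2)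
        = (cfM (digL a (j + 1) m)).1.1 + x (j + m) * (cfM (digL a (j + 1) m)).2.1 := by
    intro m
    induction m with
    | zero => intro j; simp [digL, cfM]
    | succ m ih =>
      intro j
      rw [digL_succ]
      have h1 := hxinv j
      have h2 := ih (j + 1)
      have hidx : j + (m + 1) = j + 1 + m := by omega
      simp only [cfM, hidx]
      set C := cfM (digL a (j + 1 + 1) m) with hC
      linear_combination (-(x j)) * h2 + ((C.1.2 + x (j + 1 + m) * C.2.2)) * h1
  -- key identity 2 : (∏ x) * (Q + x Q') = 1
  have key2 : ∀ m j,
      (∏ t ∈ Finset.range m, x (j + t)) *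
        ((cfM (digL a (j + 1) m)).1.2 + x (j + m) * (cfM (digL a (j + 1) m)).2.2) = 1 := by
    intro m
    induction m with
    | zero => intro j; simp [digL, cfM]
    | succ m ih =>
      intro j
      rw [digL_succ]
      have h1 := hxinv j
      have h2 := key1 m (j + 1)
      have h3 := ih (j + 1)
      have hprod : (∏ t ∈ Finset.range (m + 1), x (j + t))
          = x j * ∏ t ∈ Finset.range m, x (j + 1 + t) := by
        rw [Finset.prod_range_succ', add_zero, mul_comm]
        congr 1
        exact Finset.prod_congr rfl fun t _ => by congr 1; omega
      rw [hprod, show j + (m + 1) = j + 1 + m from by omega]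
      simp only [cfM]
      set C := cfM (digL a (j + 1 + 1) m) with hC
      set Pi := ∏ t ∈ Finset.range m, x (j + 1 + t) with hPi
      set A := C.1.2 + x (j + 1 + m) * C.2.2 with hA
      linear_combination h3 + (-(x j * Pi)) * h2 + (Pi * A) * h1
  -- abbreviations at j = 0
  set P : ℕ → ℂ := fun n => (cfM (digL a 1 n)).1.1 with hPdef
  set Q : ℕ → ℂ := fun n => (cfM (digL a 1 n)).1.2 with hQdef
  set P' : ℕ → ℂ := fun n => (cfM (digL a 1 n)).2.1 with hP'def
  set Q' : ℕ → ℂ := fun n => (cfM (digL a 1 n)).2.2 with hQ'def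
  set π : ℕ → ℂ := fun n => ∏ t ∈ Finset.range n, x t with hπdef
  have hk1 : ∀ n, x 0 * (Q n + x n * Q' n) = P n + x n * P' n := by
    intro n; have := key1 n 0; simpa using this
  have hk2 : ∀ n, π n * (Q n + x n * Q' n) = 1 := by
    intro n; have := key2 n 0; simpa using this
  have hlen : ∀ n, (digL a 1 n).length = n := by
    intro n; simp [digL]
  have hdet : ∀ n, P n * Q' n - P' n * Q n = (-1) ^ (n + 1) := by
    intro n; have := cfM_det (digL a 1 n); rwa [hlen] at this
  have hmem : ∀ n, P n ∈ Z ∧ Q n ∈ Z := by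
    intro n
    have := cfM_mem Z (digL a 1 n) ?_
    · exact ⟨this.1, this.2.1⟩
    · intro b hb
      simp only [digL, List.mem_map, List.mem_range] at hb
      obtain ⟨j, _, rfl⟩ := hb
      exact ha _ (by omega)
  -- norms of products
  have hπnorm_pos : ∀ n, 0 < ‖π n‖ := by
    intro n
    rw [norm_pos_iff]
    exact Finset.prod_ne_zero_iff.2 fun t _ => hne t
  have hπnorm_le : ∀ n, ‖π n‖ ≤ 1 := by
    intro n
    rw [hπdef]
    simp only
    rw [norm_prod]
    exact Finset.prod_le_one (fun t _ => norm_nonneg _) (fun t _ => (hlt t).le)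
  have hπsucc : ∀ n, ‖π (n + 1)‖ = ‖π n‖ * ‖x n‖ := by
    intro n
    rw [hπdef]
    simp only
    rw [Finset.prod_range_succ, norm_mul]
  have hπanti : StrictAnti (fun n => ‖π n‖) := by
    apply strictAnti_nat_of_succ_lt
    intro n
    rw [hπsucc n]
    calc ‖π n‖ * ‖x n‖ < ‖π n‖ * 1 := by
          exact mul_lt_mul_of_pos_left (hlt n) (hπnorm_pos n)
      _ = ‖π n‖ := mul_one _
  -- the quantity y n = Q n + x n * Q' n
  have hynorm : ∀ n, ‖π n‖ * ‖Q n + x n * Q' n‖ = 1 := by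
    intro n
    rw [← norm_mul, hk2 n, norm_one]
  have hyge : ∀ n, 1 ≤ ‖Q n + x n * Q' n‖ := by
    intro n
    by_contra h
    push_neg at h
    have := hynorm n
    nlinarith [hπnorm_le n, hπnorm_pos n, norm_nonneg (Q n + x n * Q' n)]
  -- nonzero elements of Z have norm ≥ 1
  have hone : ∀ z : ℂ, z ∈ Z → z ≠ 0 → 1 ≤ ‖z‖ := by
    intro z hz hz0
    by_contra h
    push_neg at h
    have hopen : IsOpen ({(⟨0, Z.zero_mem⟩ : Z)} : Set Z) := isOpen_discrete _
    rw [isOpen_induced_iff] at hopen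
    obtain ⟨U, hU, hUeq⟩ := hopen
    have h0U : (0 : ℂ) ∈ U := by
      have : (⟨0, Z.zero_mem⟩ : Z) ∈ ({(⟨0, Z.zero_mem⟩ : Z)} : Set Z) := rfl
      rw [← hUeq] at this
      exact this
    obtain ⟨ε, hε, hball⟩ := Metric.isOpen_iff.1 hU 0 h0U
    obtain ⟨n, hn⟩ := exists_pow_lt_of_lt_one hε h
    have hzn : z ^ n ∈ U := by
      apply hball
      simp only [Metric.mem_ball, dist_zero_right]
      calc ‖z ^ n‖ = ‖z‖ ^ n := norm_pow z n
        _ < ε := hn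
    have : (⟨z ^ n, Z.pow_mem hz n⟩ : Z) ∈ ({(⟨0, Z.zero_mem⟩ : Z)} : Set Z) := by
      rw [← hUeq]; exact hzn
    have : z ^ n = 0 := by
      simpa [Subtype.ext_iff] using this
    exact pow_ne_zero n hz0 this
  -- Q n ≠ 0
  have hQne : ∀ n, Q n ≠ 0 := by
    intro n hQ0
    have hd := hdet n
    rw [hQ0, mul_zero, sub_zero] at hd
    have hm1 : ((-1 : ℂ)) ^ (n + 1) ≠ 0 := pow_ne_zero _ (by norm_num)
    have hPn : P n ≠ 0 := by
      intro h; rw [h, zero_mul] at hd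
      exact hm1 hd.symm
    have hQ'n : Q' n ≠ 0 := by
      intro h; rw [h, mul_zero] at hd
      exact hm1 hd.symm
    have hnorm1 : ‖P n‖ * ‖Q' n‖ = 1 := by
      rw [← norm_mul, hd]
      simp
    have hP1 : 1 ≤ ‖P n‖ := hone _ (hmem n).1 hPn
    have hQ'le : ‖Q' n‖ ≤ 1 := by nlinarith [norm_nonneg (Q' n)]
    have hy : ‖Q n + x n * Q' n‖ < 1 := by
      rw [hQ0, zero_add, norm_mul]
      nlinarith [hlt n, norm_nonneg (x n), norm_nonneg (Q' n), hπnorm_pos n]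
    linarith [hyge n]
  -- the error term E n = x 0 * Q n - P n
  have hEeq : ∀ n, (Q n + x n * Q' n) * (x 0 * Q n - P n) = -(x n * (-1) ^ (n + 1)) := by
    intro n
    linear_combination (Q n) * hk1 n - (x n) * hdet n
  have hEnorm : ∀ n, ‖x 0 * Q n - P n‖ = ‖π (n + 1)‖ := by
    intro n
    have h := congrArg norm (hEeq n)
    rw [norm_mul, norm_neg, norm_mul, norm_pow, norm_neg, norm_one, one_pow, mul_one] at h
    have hy1 := hynorm n
    calc ‖x 0 * Q n - P n‖ = 1 * ‖x 0 * Q n - P n‖ := (one_mul _).symm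
      _ = (‖π n‖ * ‖Q n + x n * Q' n‖) * ‖x 0 * Q n - P n‖ := by rw [hy1]
      _ = ‖π n‖ * (‖Q n + x n * Q' n‖ * ‖x 0 * Q n - P n‖) := by ring
      _ = ‖π n‖ * ‖x n‖ := by rw [h]
      _ = ‖π (n + 1)‖ := (hπsucc n).symm
  -- injectivity of n ↦ (P n, Q n)
  have hinj : Function.Injective (fun n => (P n, Q n)) := by
    intro n m h
    simp only [Prod.mk.injEq] at h
    have : ‖x 0 * Q n - P n‖ = ‖x 0 * Q m - P m‖ := by rw [h.1, h.2]
    rw [hEnorm n, hEnorm m] at this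
    have := hπanti.injective this
    omega
  -- error bound
  have hbound : ∀ n, ‖P n * (Q n)⁻¹ - x₀‖ ≤ (‖Q n‖)⁻¹ := by
    intro n
    have hQ := hQne n
    have : P n * (Q n)⁻¹ - x₀ = -((x 0 * Q n - P n) * (Q n)⁻¹) := by
      rw [← hx0]
      field_simp
      ring
    rw [this, norm_neg, norm_mul, norm_inv, hEnorm n]
    exact mul_le_of_le_one_left (inv_nonneg.2 (norm_nonneg _)) (hπnorm_le (n + 1))
  -- ‖Q n‖ → ∞
  have hQtend : Tendsto (fun n => ‖Q n‖) atTop atTop := by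
    rw [tendsto_atTop]
    intro b
    rw [← Nat.cofinite_eq_atTop]
    have hfin : {n | ‖Q n‖ < b}.Finite := by
      set R := max b (‖x 0‖ * b + 1) with hR
      have hSfin : ((Z : Set ℂ) ∩ Metric.closedBall 0 R).Finite := by
        have hclosed : IsClosed (Z : Set ℂ) := by
          have : DiscreteTopology Z.toAddSubgroup := hZdisc
          exact AddSubgroup.isClosed_of_discrete (H := Z.toAddSubgroup)
        have hcpt : IsCompact ((Z : Set ℂ) ∩ Metric.closedBall 0 R) :=
          (isCompact_closedBall 0 R).of_isClosed_subset
            (hclosed.inter Metric.isClosed_closedBall) Set.inter_subset_right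
        have hdisc : DiscreteTopology ((Z : Set ℂ) ∩ Metric.closedBall 0 R : Set ℂ) :=
          DiscreteTopology.of_subset hZdisc Set.inter_subset_left
        exact hcpt.finite (isDiscrete_iff_discreteTopology.2 hdisc)
      have hsub : {n | ‖Q n‖ < b} ⊆
          (fun n => (P n, Q n)) ⁻¹'
            (((Z : Set ℂ) ∩ Metric.closedBall 0 R) ×ˢ ((Z : Set ℂ) ∩ Metric.closedBall 0 R)) := by
        intro n hn
        simp only [Set.mem_setOf_eq] at hn
        have hQb : ‖Q n‖ ≤ R := le_trans hn.le (le_max_left _ _)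
        have hPb : ‖P n‖ ≤ R := by
          have h1 : ‖P n‖ ≤ ‖x 0 * Q n‖ + ‖x 0 * Q n - P n‖ := by
            have := norm_sub_norm_le (x 0 * Q n) (P n)
            have := norm_sub_rev (x 0 * Q n) (P n)
            calc ‖P n‖ = ‖x 0 * Q n - (x 0 * Q n - P n)‖ := by ring_nf
              _ ≤ ‖x 0 * Q n‖ + ‖x 0 * Q n - P n‖ := norm_sub_le _ _
          have h2 : ‖x 0 * Q n - P n‖ ≤ 1 := by rw [hEnorm n]; exact hπnorm_le _
          have h3 : ‖x 0 * Q n‖ ≤ ‖x 0‖ * b := by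
            rw [norm_mul]
            have := norm_nonneg (x 0)
            nlinarith
          calc ‖P n‖ ≤ ‖x 0‖ * b + 1 := by linarith
            _ ≤ R := le_max_right _ _
        constructor
        · exact ⟨(hmem n).1, by simpa [Metric.mem_closedBall, dist_zero_right] using hPb⟩
        · exact ⟨(hmem n).2, by simpa [Metric.mem_closedBall, dist_zero_right] using hQb⟩
      exact ((hSfin.prod hSfin).preimage hinj.injOn).subset hsub
    filter_upwards [hfin.eventually_cofinite_notMem] with n hn
    simpa using not_lt.1 hn
  -- conclude
  have hgoal : Tendsto (fun n => P n * (Q n)⁻¹) atTop (nhds x₀) := by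
    rw [← tendsto_sub_nhds_zero_iff]
    apply squeeze_zero_norm hbound
    exact hQtend.inv_tendsto_atTop
  have hsuff : ∀ n, suffList a 1 n = digL a 1 n := by
    intro n
    simp [suffList, digL]
  convert hgoal using 2 with n
  rw [hsuff n, ← cfM_fst]
end

section
/- Let ℍ be the real quaternions and let Z be a subring of ℍ that is discrete (as a subset of ℍ in the norm topology) and closed under quaternionic conjugation (star). Let (a_n)_{n≥1} be a sequence with a_n ∈ Z for all n, let x₀ ∈ ℍ, and define the forward orbit x_0 = x₀, x_{n+1} = (x_n)⁻¹ − a_{n+1}. Suppose that for every n ≥ 0 one has x_n ≠ 0 and ‖x_n‖ < 1. Then the sequence of convergents c_n = P[a_1,…,a_n]·(Q[a_1,…,a_n])⁻¹ tends to x₀ as n → ∞. -/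
open Filter

/-- Companion to `cfPQ` with base `(1, 0)`; gives the previous convergent. -/
def cfRS {k : Type*} [DivisionRing k] : List k → k × k
  | [] => (1, 0)
  | a :: l => ((cfRS l).2, a * (cfRS l).2 + (cfRS l).1)

lemma cf_append {k : Type*} [DivisionRing k] (l : List k) (b : k) :
    cfPQ (l ++ [b]) = ((cfPQ l).1 * b + (cfRS l).1, (cfPQ l).2 * b + (cfRS l).2) ∧
      cfRS (l ++ [b]) = cfPQ l := by
  induction l with
  | nil => simp [cfPQ, cfRS]
  | cons a l ih =>
    simp only [List.cons_append, cfPQ, cfRS, List.append_eq, ih.1, ih.2, Prod.mk.injEq]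
    refine ⟨⟨trivial, ?_⟩, trivial⟩
    noncomm_ring

lemma suffList_succ {k : Type*} (a : ℕ → k) (n : ℕ) :
    suffList a 1 (n + 1) = suffList a 1 n ++ [a (n + 1)] := by
  simp [suffList, List.range_succ, Nat.add_comm]

lemma suffList_zero {k : Type*} (a : ℕ → k) : suffList a 1 0 = [] := by
  simp [suffList]

set_option maxHeartbeats 1600000 in
/-- Theorem 1.2 of the paper for `k = ℍ` (the real quaternions). -/
theorem quaternion_cf_convergence (Z : Subring (Quaternion ℝ))
    (hZdisc : DiscreteTopology Z)
    (hZconj : ∀ z ∈ Z, star z ∈ Z)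
    (a : ℕ → Quaternion ℝ) (ha : ∀ n, 1 ≤ n → a n ∈ Z)
    (x₀ : Quaternion ℝ) (x : ℕ → Quaternion ℝ) (hx0 : x 0 = x₀)
    (hstep : ∀ n, x (n + 1) = (x n)⁻¹ - a (n + 1))
    (hne : ∀ n, x n ≠ 0) (hlt : ∀ n, ‖x n‖ < 1) :
    Tendsto (fun n => (cfPQ (suffList a 1 n)).1 * ((cfPQ (suffList a 1 n)).2)⁻¹)
      atTop (nhds x₀) := by
  classical
  set P : ℕ → Quaternion ℝ := fun n => (cfPQ (suffList a 1 n)).1 with hPdef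
  set Q : ℕ → Quaternion ℝ := fun n => (cfPQ (suffList a 1 n)).2 with hQdef
  let R : ℕ → Quaternion ℝ := fun n => (cfRS (suffList a 1 n)).1
  let S : ℕ → Quaternion ℝ := fun n => (cfRS (suffList a 1 n)).2
  let π : ℕ → ℝ := fun n => ∏ k ∈ Finset.range n, ‖x k‖
  -- basic values
  have hP0 : P 0 = 0 := by simp [hPdef, suffList_zero, cfPQ]
  have hQ0 : Q 0 = 1 := by simp [hQdef, suffList_zero, cfPQ]
  have hR0 : R 0 = 1 := by simp [R, suffList_zero, cfRS]
  have hS0 : S 0 = 0 := by simp [S, suffList_zero, cfRS]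
  have hPs : ∀ n, P (n + 1) = P n * a (n + 1) + R n := by
    intro n; simp only [hPdef, R, suffList_succ, (cf_append _ _).1]
  have hQs : ∀ n, Q (n + 1) = Q n * a (n + 1) + S n := by
    intro n; simp only [hQdef, S, suffList_succ, (cf_append _ _).1]
  have hRs : ∀ n, R (n + 1) = P n := by
    intro n; simp only [hPdef, R, suffList_succ, (cf_append _ _).2]
  have hSs : ∀ n, S (n + 1) = Q n := by
    intro n; simp only [hQdef, S, suffList_succ, (cf_append _ _).2]
  have hxnorm : ∀ n, (0:ℝ) < ‖x n‖ := fun n => norm_pos_iff.mpr (hne n)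
  have hπpos : ∀ n, (0:ℝ) < π n := fun n => Finset.prod_pos (fun k _ => hxnorm k)
  have hπle1 : ∀ n, π n ≤ 1 :=
    fun n => Finset.prod_le_one (fun k _ => (hxnorm k).le) (fun k _ => (hlt k).le)
  have hπsucc : ∀ n, π (n + 1) = π n * ‖x n‖ := fun n => Finset.prod_range_succ _ _
  have hπanti : StrictAnti π := by
    apply strictAnti_nat_of_succ_lt
    intro n
    rw [hπsucc n]
    nlinarith [hπpos n, hlt n, hxnorm n]
  have hπ0 : π 0 = 1 := by simp [π]
  have hπlt1 : ∀ n, π (n + 1) < 1 := fun n => by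
    have := hπanti (Nat.succ_pos n); rwa [hπ0] at this
  -- digit relation
  have hax : ∀ n, a (n + 1) + x (n + 1) = (x n)⁻¹ := by
    intro n; rw [hstep n]; abel
  -- key linear identity  P n + R n * x n = x₀ * (Q n + S n * x n)
  have hu : ∀ n, P n + R n * x n = x₀ * (Q n + S n * x n) := by
    intro n
    induction n with
    | zero => simp [hP0, hQ0, hR0, hS0, hx0]
    | succ n ih =>
      rw [hPs n, hQs n, hRs n, hSs n]
      have h1 : P n * a (n + 1) + R n + P n * x (n + 1) = P n * (x n)⁻¹ + R n := by
        rw [← hax n, mul_add]; abel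
      have h2 : Q n * a (n + 1) + S n + Q n * x (n + 1) = Q n * (x n)⁻¹ + S n := by
        rw [← hax n, mul_add]; abel
      calc P n * a (n + 1) + R n + P n * x (n + 1) = P n * (x n)⁻¹ + R n := h1
        _ = x₀ * (Q n * (x n)⁻¹ + S n) := by
            have := congrArg (fun t => t * (x n)⁻¹) ih
            simp only [add_mul, mul_assoc, mul_inv_cancel₀ (hne n), mul_one] at this
            exact this
        _ = x₀ * (Q n * a (n + 1) + S n + Q n * x (n + 1)) := by rw [h2]
  -- denominator evolution
  have hd : ∀ n, Q (n + 1) + S (n + 1) * x (n + 1) = (Q n + S n * x n) * (x n)⁻¹ := by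
    intro n
    rw [hQs n, hSs n, add_mul, mul_assoc, mul_inv_cancel₀ (hne n), mul_one, ← hax n, mul_add]
    abel
  have hdnorm : ∀ n, ‖Q n + S n * x n‖ = (π n)⁻¹ := by
    intro n
    induction n with
    | zero => simp [hQ0, hS0, hπ0]
    | succ n ih =>
      rw [hd n, norm_mul, norm_inv, ih, hπsucc n, mul_inv]
  -- error terms
  have hE : ∀ n, P n - x₀ * Q n = -((R n - x₀ * S n) * x n) := by
    intro n
    have h : P n + R n * x n = x₀ * Q n + x₀ * (S n * x n) := by
      rw [hu n, mul_add]
    rw [sub_mul, mul_assoc, neg_sub, sub_eq_sub_iff_add_eq_add, h, add_comm]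
  have hEnorm : ∀ n, ‖P n - x₀ * Q n‖ = π (n + 1) := by
    intro n
    induction n with
    | zero => simp [hP0, hQ0, π, hx0]
    | succ n ih =>
      rw [hE (n + 1), hRs n, hSs n, norm_neg, norm_mul, ih, hπsucc (n + 1)]
  have hE' : ∀ n, R n - x₀ * S n ≠ 0 ∧ ‖R n - x₀ * S n‖ ≤ 1 := by
    intro n
    match n with
    | 0 => simp [hR0, hS0]
    | n + 1 =>
      rw [hRs n, hSs n]
      constructor
      · intro h
        have := hEnorm n
        rw [h, norm_zero] at this
        exact absurd this.symm (ne_of_gt (hπpos (n + 1)))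
      · rw [hEnorm n]
        exact (hπle1 (n + 1))
  -- discreteness: nonzero elements of Z have norm ≥ 1
  have hZone : ∀ z : Quaternion ℝ, z ∈ Z → z ≠ 0 → 1 ≤ ‖z‖ := by
    have h := isOpen_discrete (α := Z) {0}
    rcases Metric.isOpen_iff.mp h 0 rfl with ⟨ε, hε, hball⟩
    intro z hz hz0
    by_contra hlt1
    push_neg at hlt1
    obtain ⟨m, hm⟩ := exists_pow_lt_of_lt_one hε hlt1
    have hzm : (z ^ m) ∈ Z := pow_mem hz m
    have : (⟨z ^ m, hzm⟩ : Z) ∈ Metric.ball (0 : Z) ε := by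
      rw [Metric.mem_ball, Subtype.dist_eq]
      simpa [norm_pow] using hm
    have := hball this
    simp only [Set.mem_singleton_iff, Subtype.ext_iff] at this
    exact pow_ne_zero m hz0 this
  -- membership of convergents in Z
  have hmem : ∀ n, P n ∈ Z ∧ Q n ∈ Z ∧ R n ∈ Z ∧ S n ∈ Z := by
    intro n
    induction n with
    | zero => rw [hP0, hQ0, hR0, hS0]; exact ⟨zero_mem Z, one_mem Z, one_mem Z, zero_mem Z⟩
    | succ n ih =>
      obtain ⟨h1, h2, h3, h4⟩ := ih
      have han : a (n + 1) ∈ Z := ha (n + 1) (Nat.le_add_left 1 n)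
      exact ⟨by rw [hPs n]; exact add_mem (mul_mem h1 han) h3,
        by rw [hQs n]; exact add_mem (mul_mem h2 han) h4,
        by rw [hRs n]; exact h1, by rw [hSs n]; exact h2⟩
  -- Q n ≠ 0
  have hQne : ∀ n, Q n ≠ 0 := by
    intro n hq
    have h1 : ‖P n - x₀ * Q n‖ = π (n + 1) := hEnorm n
    rw [hq, mul_zero, sub_zero] at h1
    have hP : P n ≠ 0 := by
      intro h; rw [h, norm_zero] at h1; exact absurd h1.symm (ne_of_gt (hπpos (n + 1)))
    have := hZone (P n) (hmem n).1 hP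
    rw [h1] at this
    exact absurd (lt_of_lt_of_le (hπlt1 n) this) (lt_irrefl _)
  have hQ1 : ∀ n, 1 ≤ ‖Q n‖ := fun n => hZone (Q n) (hmem n).2.1 (hQne n)
  have hQpos : ∀ n, (0:ℝ) < ‖Q n‖ := fun n => lt_of_lt_of_le one_pos (hQ1 n)
  -- distance formula
  have hdist : ∀ n, dist (P n * (Q n)⁻¹) x₀ = π (n + 1) / ‖Q n‖ := by
    intro n
    rw [dist_eq_norm]
    have : P n * (Q n)⁻¹ - x₀ = (P n - x₀ * Q n) * (Q n)⁻¹ := by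
      rw [sub_mul, mul_assoc, mul_inv_cancel₀ (hQne n), mul_one]
    rw [this, norm_mul, norm_inv, hEnorm n, div_eq_mul_inv]
  -- main convergence
  rw [Metric.tendsto_atTop]
  by_contra hcon
  push_neg at hcon
  obtain ⟨ε, hε, hfreq⟩ := hcon
  have hfreq : ∀ N, ∃ n ≥ N, ε ≤ π (n + 1) / ‖Q n‖ := fun N => by
    obtain ⟨n, hn, h⟩ := hfreq N; exact ⟨n, hn, by rw [← hdist n]; exact h⟩
  -- ∀ k, ε ≤ π k
  have hπε : ∀ k, ε ≤ π k := by
    intro k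
    obtain ⟨n, hnk, hd⟩ := hfreq k
    have h1 : ε ≤ π (n + 1) := le_trans hd (div_le_self (hπpos (n+1)).le (hQ1 n))
    exact le_trans h1 (hπanti.antitone (Nat.le_succ_of_le hnk))
  have hε1 : ε < 1 := lt_of_le_of_lt (hπε 1) (hπlt1 0)
  have hx₀lt : ‖x₀‖ < 1 := by rw [← hx0]; exact hlt 0
  set C : ℝ := 2 / ε ^ 2 + 2 with hCdef
  -- bounds on the quadruple for indices in the bad set
  have hbound : ∀ n, ε ≤ π (n + 1) / ‖Q n‖ →
      ‖P n‖ ≤ C ∧ ‖Q n‖ ≤ C ∧ ‖R n‖ ≤ C ∧ ‖S n‖ ≤ C := by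
    intro n hn
    have hQb : ‖Q n‖ ≤ 1 / ε := by
      have h' : ε * ‖Q n‖ ≤ 1 := le_trans ((le_div_iff₀ (hQpos n)).mp hn) (hπle1 _)
      rw [le_div_iff₀ hε]
      nlinarith
    have hdb : ‖Q n + S n * x n‖ ≤ 1 / ε := by
      rw [hdnorm n, inv_le_comm₀ (hπpos n) (by positivity)]
      calc (1/ε)⁻¹ = ε := by field_simp
        _ ≤ π n := hπε n
    have hxb : ε ≤ ‖x n‖ := by
      have h1 : π (n + 1) ≤ ‖x n‖ := by
        rw [hπsucc n]
        nlinarith [hπle1 n, hxnorm n, hπpos n]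
      exact le_trans (hπε (n + 1)) h1
    have hSb : ‖S n‖ ≤ 2 / ε ^ 2 := by
      have h1 : ‖S n * x n‖ ≤ 2 / ε := by
        have : S n * x n = (Q n + S n * x n) - Q n := by abel
        rw [this]
        calc ‖Q n + S n * x n - Q n‖ ≤ ‖Q n + S n * x n‖ + ‖Q n‖ := norm_sub_le _ _
          _ ≤ 1 / ε + 1 / ε := add_le_add hdb hQb
          _ = 2 / ε := by ring
      rw [norm_mul] at h1
      have h3 : (2 / ε) * ε = 2 := div_mul_cancel₀ 2 hε.ne'
      rw [le_div_iff₀ (by positivity : (0:ℝ) < ε ^ 2)]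
      nlinarith [mul_le_mul_of_nonneg_right h1 hε.le,
        mul_le_mul_of_nonneg_left hxb (mul_nonneg (norm_nonneg (S n)) hε.le),
        norm_nonneg (S n)]
    have hPb : ‖P n‖ ≤ 1 + 1 / ε := by
      have : P n = (P n - x₀ * Q n) + x₀ * Q n := by abel
      rw [this]
      calc ‖P n - x₀ * Q n + x₀ * Q n‖ ≤ ‖P n - x₀ * Q n‖ + ‖x₀ * Q n‖ := norm_add_le _ _
        _ ≤ 1 + 1 / ε := by
            rw [hEnorm n, norm_mul]
            have := hπle1 (n + 1)
            nlinarith [norm_nonneg x₀, hQpos n, hx₀lt]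
    have hRb : ‖R n‖ ≤ 1 + 2 / ε ^ 2 := by
      have : R n = (R n - x₀ * S n) + x₀ * S n := by abel
      rw [this]
      calc ‖R n - x₀ * S n + x₀ * S n‖ ≤ ‖R n - x₀ * S n‖ + ‖x₀ * S n‖ := norm_add_le _ _
        _ ≤ 1 + 2 / ε ^ 2 := by
            rw [norm_mul]
            have h1 := (hE' n).2
            nlinarith [norm_nonneg x₀, norm_nonneg (S n), hx₀lt, hSb]
    have hεsq : 1 / ε ≤ 2 / ε ^ 2 := by
      rw [div_le_div_iff₀ hε (by positivity)]
      nlinarith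
    refine ⟨?_, ?_, ?_, ?_⟩
    · calc ‖P n‖ ≤ 1 + 1 / ε := hPb
        _ ≤ C := by rw [hCdef]; nlinarith
    · calc ‖Q n‖ ≤ 1 / ε := hQb
        _ ≤ C := by rw [hCdef]; nlinarith [sq_nonneg ε]
    · calc ‖R n‖ ≤ 1 + 2 / ε ^ 2 := hRb
        _ ≤ C := by rw [hCdef]; nlinarith
    · calc ‖S n‖ ≤ 2 / ε ^ 2 := hSb
        _ ≤ C := by rw [hCdef]; nlinarith
  -- finite target set
  have hZclosed : IsClosed (Z : Set (Quaternion ℝ)) := by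
    have h2 : DiscreteTopology Z.toAddSubgroup := hZdisc
    exact AddSubgroup.isClosed_of_discrete (H := Z.toAddSubgroup)
  have hTfin : Set.Finite (Metric.closedBall (0 : Quaternion ℝ) C ∩ (Z : Set (Quaternion ℝ))) := by
    have h1 : DiscreteTopology ((Z : Set (Quaternion ℝ)) : Set (Quaternion ℝ)) := hZdisc
    exact Metric.finite_isBounded_inter_isClosed DiscreteTopology.isDiscrete Metric.isBounded_closedBall hZclosed
  set T : Set (Quaternion ℝ) := Metric.closedBall (0 : Quaternion ℝ) C ∩ (Z : Set (Quaternion ℝ))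
    with hTdef
  -- the bad set is infinite
  set Bad : Set ℕ := {n | ε ≤ π (n + 1) / ‖Q n‖} with hBdef
  have hBadinf : Bad.Infinite := by
    apply Set.infinite_of_not_bddAbove
    rintro ⟨b, hb⟩
    obtain ⟨n, hnb, hn⟩ := hfreq (b + 1)
    have := hb hn
    omega
  have hmaps : Set.MapsTo (fun n => ((P n, Q n), (R n, S n))) Bad ((T ×ˢ T) ×ˢ (T ×ˢ T)) := by
    intro n hn
    obtain ⟨b1, b2, b3, b4⟩ := hbound n hn
    obtain ⟨m1, m2, m3, m4⟩ := hmem n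
    refine ⟨⟨⟨?_, m1⟩, ⟨?_, m2⟩⟩, ⟨⟨?_, m3⟩, ⟨?_, m4⟩⟩⟩ <;>
      simp only [Metric.mem_closedBall, dist_zero_right] <;> assumption
  obtain ⟨n, hnB, m, hmB, hnm, heq⟩ :=
    hBadinf.exists_ne_map_eq_of_mapsTo hmaps (((hTfin.prod hTfin)).prod (hTfin.prod hTfin))
  simp only [Prod.mk.injEq] at heq
  obtain ⟨⟨eP, eQ⟩, eR, eS⟩ := heq
  -- symmetric core argument
  have key : ∀ i j : ℕ, i < j → P i = P j → Q i = Q j → R i = R j → S i = S j → False := by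
    intro i j hij hP hQ hR hS
    have huj := hu j
    rw [← hP, ← hQ, ← hR, ← hS] at huj
    have hui := hu i
    -- (R i - x₀ S i) * x j = (R i - x₀ S i) * x i
    have hcore : ∀ y : Quaternion ℝ, P i + R i * y = x₀ * (Q i + S i * y) →
        (R i - x₀ * S i) * y = x₀ * Q i - P i := by
      intro y hy
      rw [mul_add] at hy
      rw [sub_mul, mul_assoc, sub_eq_sub_iff_add_eq_add, add_comm (R i * y) (P i)]
      rw [hy]
    have h1 := hcore (x j) huj
    have h2 := hcore (x i) hui
    have hxeq : x j = x i := mul_left_cancel₀ (hE' i).1 (h1.trans h2.symm)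
    have hdeq : Q j + S j * x j = Q i + S i * x i := by rw [← hQ, ← hS, hxeq]
    have := hdnorm j
    rw [hdeq, hdnorm i, inv_inj] at this
    exact absurd this (ne_of_gt (hπanti hij))
  rcases hnm.lt_or_gt with h | h
  · exact key n m h eP eQ eR eS
  · exact key m n h eP.symm eQ.symm eR.symm eS.symm
end

section
/- Let Z be a subring of ℂ that is discrete (as a subset of ℂ in the norm topology) and closed under complex conjugation. Let (a_n)_{n≥1} be a sequence with a_n ∈ Z, let x₀ ∈ ℂ, and define the forward orbit x_0 = x₀, x_{n+1} = (x_n)⁻¹ − a_{n+1}; assume x_n ≠ 0 for all n ≥ 0. Suppose: (1) for all 0 ≤ m ≤ n and every nonzero z ∈ Z, one has ∏_{i=m}^{n} ‖x_i‖ ≠ ‖z‖; and (2) the partial products ∏_{i=0}^{n} ‖x_i‖ tend to 0 as n → ∞. Then the sequence of convergents c_n = P[a_1,…,a_n]·(Q[a_1,…,a_n])⁻¹ tends to x₀ as n → ∞. -/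
open Filter

lemma suffList_nil {k : Type*} (a : ℕ → k) (i n : ℕ) (h : n < i) :
    suffList a i n = [] := by
  unfold suffList
  rw [show n + 1 - i = 0 from by omega]
  rfl

lemma suffList_cons {k : Type*} (a : ℕ → k) (i n : ℕ) (h : i ≤ n) :
    suffList a i n = a i :: suffList a (i + 1) n := by
  unfold suffList
  rw [show n + 1 - i = (n + 1 - (i + 1)) + 1 from by omega, List.range_succ_eq_map,
    List.map_cons, List.map_map]
  congr 1
  apply List.map_congr_left
  intro j _
  simp only [Function.comp_apply, Nat.succ_eq_add_one]
  congr 1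
  omega

lemma cfPQ_mem (Z : Subring ℂ) : ∀ l : List ℂ, (∀ y ∈ l, y ∈ Z) →
    (cfPQ l).1 ∈ Z ∧ (cfPQ l).2 ∈ Z
  | [], _ => ⟨Z.zero_mem, Z.one_mem⟩
  | b :: l, h => by
      obtain ⟨h1, h2⟩ := cfPQ_mem Z l (fun y hy => h y (List.mem_cons_of_mem _ hy))
      exact ⟨h2, Z.add_mem (Z.mul_mem (h b List.mem_cons_self) h2) h1⟩

lemma cf_key (a x : ℕ → ℂ) (hstep : ∀ n, x (n + 1) = (x n)⁻¹ - a (n + 1))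
    (hne : ∀ n, x n ≠ 0) :
    ∀ d m, ‖x m * (cfPQ (suffList a (m + 1) (m + d))).2
        - (cfPQ (suffList a (m + 1) (m + d))).1‖
      = ∏ i ∈ Finset.Icc m (m + d), ‖x i‖ := by
  intro d
  induction d with
  | zero =>
    intro m
    rw [suffList_nil a (m + 1) (m + 0) (by omega)]
    simp [cfPQ]
  | succ d ih =>
    intro m
    rw [suffList_cons a (m + 1) (m + (d + 1)) (by omega)]
    set P := (cfPQ (suffList a (m + 1 + 1) (m + (d + 1)))).1 with hP
    set Q := (cfPQ (suffList a (m + 1 + 1) (m + (d + 1)))).2 with hQ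
    have hA : a (m + 1) = (x m)⁻¹ - x (m + 1) := by rw [hstep m]; ring
    have hmain : x m * (a (m + 1) * Q + P) - Q = (-x m) * (x (m + 1) * Q - P) := by
      rw [hA]
      field_simp [hne m]
      ring
    have hcf : cfPQ (a (m + 1) :: suffList a (m + 1 + 1) (m + (d + 1)))
        = (Q, a (m + 1) * Q + P) := rfl
    rw [hcf]
    simp only
    rw [hmain, norm_mul, norm_neg]
    have ih' := ih (m + 1)
    rw [show m + 1 + d = m + (d + 1) from by omega] at ih'
    rw [ih']
    have hins : Finset.Icc m (m + (d + 1)) = insert m (Finset.Icc (m + 1) (m + (d + 1))) := by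
      ext j; simp; omega
    rw [hins, Finset.prod_insert (by simp)]

/-- Theorem 1.4 of the paper for `k = ℂ`. -/
theorem complex_cf_convergence_of_transcendental (Z : Subring ℂ)
    (hZdisc : DiscreteTopology Z)
    (hZconj : ∀ z ∈ Z, starRingEnd ℂ z ∈ Z)
    (a : ℕ → ℂ) (ha : ∀ n, 1 ≤ n → a n ∈ Z)
    (x₀ : ℂ) (x : ℕ → ℂ) (hx0 : x 0 = x₀)
    (hstep : ∀ n, x (n + 1) = (x n)⁻¹ - a (n + 1))
    (hne : ∀ n, x n ≠ 0)
    (hwindow : ∀ m n : ℕ, m ≤ n → ∀ z ∈ Z, z ≠ 0 →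
      ∏ i ∈ Finset.Icc m n, ‖x i‖ ≠ ‖z‖)
    (hprod : Tendsto (fun n => ∏ i ∈ Finset.range (n + 1), ‖x i‖) atTop (nhds 0)) :
    Tendsto (fun n => (cfPQ (suffList a 1 n)).1 * ((cfPQ (suffList a 1 n)).2)⁻¹)
      atTop (nhds x₀) := by
  -- uniform lower bound on nonzero elements of Z from discreteness
  obtain ⟨δ, hδpos, hδ⟩ : ∃ δ > 0, ∀ z ∈ Z, ‖z‖ < δ → z = 0 := by
    have hopen : IsOpen ({(0 : Z)} : Set Z) := isOpen_discrete _
    rw [isOpen_induced_iff] at hopen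
    obtain ⟨U, hU, hUeq⟩ := hopen
    have h0U : (0 : ℂ) ∈ U := by
      have : ((0 : Z) : ℂ) ∈ U := by
        have : (0 : Z) ∈ (Subtype.val ⁻¹' U : Set Z) := by rw [hUeq]; rfl
        exact this
      simpa using this
    obtain ⟨δ, hδpos, hball⟩ := Metric.isOpen_iff.1 hU 0 h0U
    refine ⟨δ, hδpos, fun z hz hlt => ?_⟩
    have : z ∈ U := hball (by simpa [Metric.mem_ball, dist_eq_norm] using hlt)
    have : (⟨z, hz⟩ : Z) ∈ (Subtype.val ⁻¹' U : Set Z) := this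
    rw [hUeq] at this
    simpa using congrArg Subtype.val this
  set p : ℕ → ℂ := fun n => (cfPQ (suffList a 1 n)).1 with hp
  set q : ℕ → ℂ := fun n => (cfPQ (suffList a 1 n)).2 with hq
  have hmem : ∀ n, p n ∈ Z ∧ q n ∈ Z := by
    intro n
    refine cfPQ_mem Z _ ?_
    intro y hy
    unfold suffList at hy
    simp only [List.mem_map, List.mem_range] at hy
    obtain ⟨j, _, rfl⟩ := hy
    exact ha _ (by omega)
  have hkey : ∀ n, ‖x₀ * q n - p n‖ = ∏ i ∈ Finset.range (n + 1), ‖x i‖ := by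
    intro n
    have h := cf_key a x hstep hne n 0
    rw [show (0 : ℕ) + 1 = 1 from rfl, show (0 : ℕ) + n = n from by omega] at h
    rw [show Finset.Icc 0 n = Finset.range (n + 1) from by ext j; simp] at h
    rw [← hx0]
    exact h
  have hprodpos : ∀ n, 0 < ∏ i ∈ Finset.range (n + 1), ‖x i‖ :=
    fun n => Finset.prod_pos fun i _ => norm_pos_iff.2 (hne i)
  have hqne : ∀ n, q n ≠ 0 := by
    intro n h0
    have h1 : ‖x₀ * q n - p n‖ = ‖p n‖ := by rw [h0]; simp
    have hpne : p n ≠ 0 := by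
      intro hp0
      have := hkey n
      rw [h1, hp0] at this
      simp at this
      exact absurd this.symm (ne_of_gt (hprodpos n))
    refine hwindow 0 n (Nat.zero_le n) (p n) (hmem n).1 hpne ?_
    rw [show Finset.Icc 0 n = Finset.range (n + 1) from by ext j; simp]
    rw [← hkey n, h1]
  have hqlb : ∀ n, δ ≤ ‖q n‖ := by
    intro n
    by_contra hlt
    exact hqne n (hδ (q n) (hmem n).2 (lt_of_not_ge hlt))
  rw [tendsto_iff_norm_sub_tendsto_zero]
  have hbound : ∀ n, ‖p n * (q n)⁻¹ - x₀‖ ≤ (∏ i ∈ Finset.range (n + 1), ‖x i‖) * δ⁻¹ := by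
    intro n
    have heq : p n * (q n)⁻¹ - x₀ = (x₀ * q n - p n) * (-(q n)⁻¹) := by
      field_simp [hqne n]
      ring
    rw [heq, norm_mul, norm_neg, norm_inv, hkey n]
    refine mul_le_mul_of_nonneg_left ?_ (le_of_lt (hprodpos n))
    exact inv_anti₀ hδpos (hqlb n)
  refine squeeze_zero (fun n => norm_nonneg _) hbound ?_
  have := hprod.mul_const δ⁻¹
  simpa using this
end

section
/- Let ℍ be the real quaternions and Z a subring of ℍ that is discrete (as a subset of ℍ in the norm topology) and closed under quaternionic conjugation (star). Let (a_n)_{n≥1} be a sequence with a_n ∈ Z, let x₀ ∈ ℍ, and define the forward orbit x_0 = x₀, x_{n+1} = (x_n)⁻¹ − a_{n+1}; assume x_n ≠ 0 for all n ≥ 0. Suppose: (1) for all 0 ≤ m ≤ n and every nonzero z ∈ Z, one has ∏_{i=m}^{n} ‖x_i‖ ≠ ‖z‖; and (2) the partial products ∏_{i=0}^{n} ‖x_i‖ tend to 0 as n → ∞. Then the sequence of convergents c_n = P[a_1,…,a_n]·(Q[a_1,…,a_n])⁻¹ tends to x₀ as n → ∞. -/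
open Filter

namespace QCFAux

variable {k : Type*} [DivisionRing k]

def mul2 (A B : (k × k) × (k × k)) : (k × k) × (k × k) :=
  ((A.1.1 * B.1.1 + A.1.2 * B.2.1, A.1.1 * B.1.2 + A.1.2 * B.2.2),
   (A.2.1 * B.1.1 + A.2.2 * B.2.1, A.2.1 * B.1.2 + A.2.2 * B.2.2))

def one2 : (k × k) × (k × k) := ((1, 0), (0, 1))

def Ma (a : k) : (k × k) × (k × k) := ((0, 1), (1, a))

def cfM : List k → (k × k) × (k × k)
  | [] => one2
  | a :: l => mul2 (Ma a) (cfM l)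

def conjE (A : (k × k) × (k × k)) : (k × k) × (k × k) :=
  ((A.2.2, A.2.1), (A.1.2, A.1.1))

def negRev (l : List k) : List k := (l.map fun b => -b).reverse

def Wprod (x : ℕ → k) : ℕ → k
  | 0 => 1
  | n + 1 => x n * Wprod x n

lemma mul2_assoc (A B C : (k × k) × (k × k)) :
    mul2 (mul2 A B) C = mul2 A (mul2 B C) := by
  simp only [mul2, Prod.mk.injEq]
  refine ⟨⟨?_, ?_⟩, ?_, ?_⟩ <;> noncomm_ring

lemma mul2_one (A : (k × k) × (k × k)) : mul2 A one2 = A := by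
  simp [mul2, one2]

lemma one_mul2 (A : (k × k) × (k × k)) : mul2 one2 A = A := by
  simp [mul2, one2]

lemma cfM_append (l₁ l₂ : List k) : cfM (l₁ ++ l₂) = mul2 (cfM l₁) (cfM l₂) := by
  induction l₁ with
  | nil => simp [cfM, one_mul2]
  | cons a l ih => simp [cfM, ih, mul2_assoc]

lemma cfM_singleton (a : k) : cfM [a] = Ma a := by
  simp [cfM, mul2_one]

lemma conjE_mul2 (A B : (k × k) × (k × k)) :
    conjE (mul2 A B) = mul2 (conjE A) (conjE B) := by
  simp [conjE, mul2, add_comm]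

lemma conjE_conjE (A : (k × k) × (k × k)) : conjE (conjE A) = A := rfl

lemma conjE_one : conjE (one2 : (k × k) × (k × k)) = one2 := rfl

lemma negRev_cons (a : k) (l : List k) : negRev (a :: l) = negRev l ++ [-a] := by
  simp [negRev]

lemma negRev_negRev (l : List k) : negRev (negRev l) = l := by
  simp [negRev, List.map_reverse, List.map_map, Function.comp_def]

lemma right_inv2 (l : List k) : mul2 (cfM l) (conjE (cfM (negRev l))) = one2 := by
  induction l with
  | nil =>
    show mul2 one2 (conjE one2) = one2
    rw [conjE_one, mul2_one]
  | cons a l ih =>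
    rw [show cfM (a :: l) = mul2 (Ma a) (cfM l) from rfl, negRev_cons, cfM_append,
      cfM_singleton, conjE_mul2, mul2_assoc, ← mul2_assoc (cfM l), ih, one_mul2]
    simp [Ma, conjE, mul2, one2]

lemma left_inv2 (l : List k) : mul2 (conjE (cfM (negRev l))) (cfM l) = one2 := by
  have h := right_inv2 (negRev l)
  rw [negRev_negRev] at h
  have h2 := congrArg conjE h
  rw [conjE_mul2, conjE_conjE, conjE_one] at h2
  exact h2

lemma cfPQ_eq (l : List k) : cfPQ l = ((cfM l).1.2, (cfM l).2.2) := by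
  induction l with
  | nil => rfl
  | cons a l ih =>
    simp [cfPQ, cfM, mul2, Ma, ih, add_comm]

lemma cfM_mem (Z : Subring k) (l : List k) (h : ∀ b ∈ l, b ∈ Z) :
    ((cfM l).1.1 ∈ Z ∧ (cfM l).1.2 ∈ Z) ∧ ((cfM l).2.1 ∈ Z ∧ (cfM l).2.2 ∈ Z) := by
  induction l with
  | nil => exact ⟨⟨one_mem Z, zero_mem Z⟩, zero_mem Z, one_mem Z⟩
  | cons a l ih =>
    have ha : a ∈ Z := h a List.mem_cons_self
    obtain ⟨⟨h11, h12⟩, h21, h22⟩ := ih (fun b hb => h b (List.mem_cons_of_mem a hb))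
    refine ⟨⟨?_, ?_⟩, ?_, ?_⟩ <;> simp only [cfM, mul2, Ma, zero_mul, one_mul, zero_add, add_zero]
    · exact h21
    · exact h22
    · exact add_mem h11 (mul_mem ha h21)
    · exact add_mem h12 (mul_mem ha h22)


lemma suffList_succ (a : ℕ → k) (n : ℕ) :
    suffList a 1 (n + 1) = suffList a 1 n ++ [a (n + 1)] := by
  simp [suffList, List.range_succ, Nat.add_comm]

lemma uv_id (a x : ℕ → k) (hstep : ∀ n, x (n + 1) = (x n)⁻¹ - a (n + 1))
    (hne : ∀ n, x n ≠ 0) (n : ℕ) :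
    ((cfM (suffList a 1 n)).2.1 * x n + (cfM (suffList a 1 n)).2.2) * Wprod x n = 1 ∧
    ((cfM (suffList a 1 n)).1.1 * x n + (cfM (suffList a 1 n)).1.2) * Wprod x n = x 0 := by
  induction n with
  | zero => simp [suffList, cfM, one2, Wprod]
  | succ n ih =>
    obtain ⟨ihu, ihv⟩ := ih
    rw [suffList_succ, cfM_append, cfM_singleton]
    set A := cfM (suffList a 1 n) with hA
    set b := a (n + 1) with hb
    have e11 : (mul2 A (Ma b)).1.1 = A.1.2 := by simp [mul2, Ma]
    have e12 : (mul2 A (Ma b)).1.2 = A.1.1 + A.1.2 * b := by simp [mul2, Ma]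
    have e21 : (mul2 A (Ma b)).2.1 = A.2.2 := by simp [mul2, Ma]
    have e22 : (mul2 A (Ma b)).2.2 = A.2.1 + A.2.2 * b := by simp [mul2, Ma]
    rw [e11, e12, e21, e22, hstep n, show Wprod x (n+1) = x n * Wprod x n from rfl]
    constructor
    · calc (A.2.2 * ((x n)⁻¹ - b) + (A.2.1 + A.2.2 * b)) * (x n * Wprod x n)
          = A.2.2 * ((x n)⁻¹ * x n) * Wprod x n + A.2.1 * (x n * Wprod x n) := by
            noncomm_ring
        _ = (A.2.1 * x n + A.2.2) * Wprod x n := by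
            rw [inv_mul_cancel₀ (hne n)]; noncomm_ring
        _ = 1 := ihu
    · calc (A.1.2 * ((x n)⁻¹ - b) + (A.1.1 + A.1.2 * b)) * (x n * Wprod x n)
          = A.1.2 * ((x n)⁻¹ * x n) * Wprod x n + A.1.1 * (x n * Wprod x n) := by
            noncomm_ring
        _ = (A.1.1 * x n + A.1.2) * Wprod x n := by
            rw [inv_mul_cancel₀ (hne n)]; noncomm_ring
        _ = x 0 := ihv

lemma norm_Wprod {K : Type*} [NormedDivisionRing K] (x : ℕ → K) (n : ℕ) :
    ‖Wprod x n‖ = ∏ i ∈ Finset.range n, ‖x i‖ := by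
  induction n with
  | zero => simp [Wprod]
  | succ n ih =>
    rw [show Wprod x (n+1) = x n * Wprod x n from rfl, norm_mul, ih,
      Finset.prod_range_succ, mul_comm]

end QCFAux




set_option maxHeartbeats 1000000

open QCFAux

/-- Theorem 1.4 of the paper for `k = ℍ` (the real quaternions). -/
theorem quaternion_cf_convergence_of_transcendental (Z : Subring (Quaternion ℝ))
    (hZdisc : DiscreteTopology Z)
    (hZconj : ∀ z ∈ Z, star z ∈ Z)
    (a : ℕ → Quaternion ℝ) (ha : ∀ n, 1 ≤ n → a n ∈ Z)
    (x₀ : Quaternion ℝ) (x : ℕ → Quaternion ℝ) (hx0 : x 0 = x₀)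
    (hstep : ∀ n, x (n + 1) = (x n)⁻¹ - a (n + 1))
    (hne : ∀ n, x n ≠ 0)
    (hwindow : ∀ m n : ℕ, m ≤ n → ∀ z ∈ Z, z ≠ 0 →
      ∏ i ∈ Finset.Icc m n, ‖x i‖ ≠ ‖z‖)
    (hprod : Tendsto (fun n => ∏ i ∈ Finset.range (n + 1), ‖x i‖) atTop (nhds 0)) :
    Tendsto (fun n => (cfPQ (suffList a 1 n)).1 * ((cfPQ (suffList a 1 n)).2)⁻¹)
      atTop (nhds x₀) := by
  obtain ⟨δ, hδpos, hδ⟩ : ∃ δ > 0, ∀ z : Quaternion ℝ, z ∈ Z → z ≠ 0 → δ ≤ ‖z‖ := by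
    haveI := hZdisc
    have h0 : IsOpen ({0} : Set Z) := isOpen_discrete _
    rw [Metric.isOpen_iff] at h0
    obtain ⟨ε, hε, hball⟩ := h0 0 rfl
    refine ⟨ε, hε, fun z hz hz0 => ?_⟩
    by_contra hlt
    push_neg at hlt
    have hmem : (⟨z, hz⟩ : Z) ∈ Metric.ball (0 : Z) ε := by
      rw [Metric.mem_ball, Subtype.dist_eq]
      simpa [dist_zero_right] using hlt
    have h1 := hball hmem
    rw [Set.mem_singleton_iff, Subtype.ext_iff] at h1
    exact hz0 h1
  have hIcc : ∀ n : ℕ, Finset.Icc 0 n = Finset.range (n + 1) := by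
    intro n; ext i; simp [Nat.lt_succ_iff]
  have hmemL : ∀ n : ℕ, ∀ b ∈ suffList a 1 n, b ∈ Z := by
    intro n b hb
    simp only [suffList, List.mem_map, List.mem_range] at hb
    obtain ⟨j, hj, rfl⟩ := hb
    exact ha (1 + j) (by omega)
  have hmemN : ∀ n : ℕ, ∀ b ∈ negRev (suffList a 1 n), b ∈ Z := by
    intro n b hb
    simp only [negRev, List.mem_reverse, List.mem_map] at hb
    obtain ⟨c, hc, rfl⟩ := hb
    exact neg_mem (hmemL n c hc)
  have key : ∀ n : ℕ, ‖(cfPQ (suffList a 1 n)).1 * ((cfPQ (suffList a 1 n)).2)⁻¹ - x₀‖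
      ≤ δ⁻¹ * ∏ i ∈ Finset.range (n + 1), ‖x i‖ := by
    intro n
    have hu := (uv_id a x hstep hne n).1
    have hv := (uv_id a x hstep hne n).2
    have hMR := right_inv2 (suffList a 1 n)
    have hRM := left_inv2 (suffList a 1 n)
    have hmemA := cfM_mem Z (suffList a 1 n) (hmemL n)
    have hmemNN := cfM_mem Z (negRev (suffList a 1 n)) (hmemN n)
    have hcf := cfPQ_eq (suffList a 1 n)
    set A := cfM (suffList a 1 n) with hAdef
    set N := cfM (negRev (suffList a 1 n)) with hNdef
    have eMR22 : A.2.1 * N.2.1 + A.2.2 * N.1.1 = 1 := by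
      have h := congrArg (fun M => M.2.2) hMR
      simpa [mul2, conjE, one2] using h
    have eRM11 : N.2.2 * A.1.1 + N.2.1 * A.2.1 = 1 := by
      have h := congrArg (fun M => M.1.1) hRM
      simpa [mul2, conjE, one2] using h
    have eRM12 : N.2.2 * A.1.2 + N.2.1 * A.2.2 = 0 := by
      have h := congrArg (fun M => M.1.2) hRM
      simpa [mul2, conjE, one2] using h
    -- Q ≠ 0
    have hQne : A.2.2 ≠ 0 := by
      intro h0
      have h2 : A.2.1 * N.2.1 = 1 := by
        rw [h0, zero_mul, add_zero] at eMR22; exact eMR22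
      have hQ'x : A.2.1 * x n * Wprod x n = 1 := by
        rw [h0, add_zero] at hu; exact hu
      have hN21 : N.2.1 ≠ 0 := by
        intro h; rw [h, mul_zero] at h2; exact zero_ne_one h2
      refine hwindow 0 n (Nat.zero_le n) N.2.1 hmemNN.2.1 hN21 ?_
      rw [hIcc n]
      have hA21 : ‖A.2.1‖ ≠ 0 := by
        simpa using left_ne_zero_of_mul_eq_one h2
      have hn1 : ‖A.2.1‖ * ‖N.2.1‖ = 1 := by
        rw [← norm_mul, h2, norm_one]
      have hn2 : ‖A.2.1‖ * (‖x n‖ * ‖Wprod x n‖) = 1 := by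
        rw [← norm_mul, ← norm_mul, ← mul_assoc, hQ'x, norm_one]
      calc ∏ i ∈ Finset.range (n + 1), ‖x i‖
          = ‖x n‖ * ‖Wprod x n‖ := by
            rw [norm_Wprod, Finset.prod_range_succ, mul_comm]
        _ = ‖N.2.1‖ := mul_left_cancel₀ hA21 (hn2.trans hn1.symm)
    -- the determinant-type element and its inverse
    have hrs : N.2.2 * (A.1.1 - A.1.2 * (A.2.2)⁻¹ * A.2.1) = 1 := by
      have hb : N.2.2 * A.1.2 = -(N.2.1 * A.2.2) := eq_neg_of_add_eq_zero_left eRM12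
      calc N.2.2 * (A.1.1 - A.1.2 * (A.2.2)⁻¹ * A.2.1)
          = N.2.2 * A.1.1 - N.2.2 * A.1.2 * ((A.2.2)⁻¹ * A.2.1) := by noncomm_ring
        _ = N.2.2 * A.1.1 + N.2.1 * (A.2.2 * (A.2.2)⁻¹) * A.2.1 := by
            rw [hb]; noncomm_ring
        _ = N.2.2 * A.1.1 + N.2.1 * A.2.1 := by
            rw [mul_inv_cancel₀ hQne, mul_one]
        _ = 1 := eRM11
    have hN22 : N.2.2 ≠ 0 := left_ne_zero_of_mul_eq_one hrs
    have hSnorm : ‖A.1.1 - A.1.2 * (A.2.2)⁻¹ * A.2.1‖ ≤ δ⁻¹ := by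
      have h1 : ‖N.2.2‖ * ‖A.1.1 - A.1.2 * (A.2.2)⁻¹ * A.2.1‖ = 1 := by
        rw [← norm_mul, hrs, norm_one]
      have h2 : δ ≤ ‖N.2.2‖ := hδ _ hmemNN.2.2 hN22
      have h3 : ‖A.1.1 - A.1.2 * (A.2.2)⁻¹ * A.2.1‖ = ‖N.2.2‖⁻¹ :=
        (inv_eq_of_mul_eq_one_right h1).symm
      rw [h3]
      exact inv_anti₀ hδpos h2
    -- error formula
    have hune : A.2.1 * x n + A.2.2 ≠ 0 := left_ne_zero_of_mul_eq_one hu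
    have hW : Wprod x n = (A.2.1 * x n + A.2.2)⁻¹ :=
      (inv_eq_of_mul_eq_one_right hu).symm
    have h3 : (x 0 - A.1.2 * (A.2.2)⁻¹) * (A.2.1 * x n + A.2.2)
        = (A.1.1 - A.1.2 * (A.2.2)⁻¹ * A.2.1) * x n := by
      have hx0v : x 0 = (A.1.1 * x n + A.1.2) * (A.2.1 * x n + A.2.2)⁻¹ := by
        rw [← hW]; exact hv.symm
      rw [hx0v]
      calc ((A.1.1 * x n + A.1.2) * (A.2.1 * x n + A.2.2)⁻¹ - A.1.2 * (A.2.2)⁻¹)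
            * (A.2.1 * x n + A.2.2)
          = (A.1.1 * x n + A.1.2) * ((A.2.1 * x n + A.2.2)⁻¹ * (A.2.1 * x n + A.2.2))
            - A.1.2 * (A.2.2)⁻¹ * (A.2.1 * x n) - A.1.2 * ((A.2.2)⁻¹ * A.2.2) := by
            noncomm_ring
        _ = A.1.1 * x n + A.1.2 - A.1.2 * (A.2.2)⁻¹ * (A.2.1 * x n) - A.1.2 := by
            rw [inv_mul_cancel₀ hune, inv_mul_cancel₀ hQne, mul_one, mul_one]
        _ = (A.1.1 - A.1.2 * (A.2.2)⁻¹ * A.2.1) * x n := by noncomm_ring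
    have herr : x 0 - A.1.2 * (A.2.2)⁻¹
        = (A.1.1 - A.1.2 * (A.2.2)⁻¹ * A.2.1) * x n * Wprod x n := by
      have h5 : x 0 - A.1.2 * (A.2.2)⁻¹
          = ((x 0 - A.1.2 * (A.2.2)⁻¹) * (A.2.1 * x n + A.2.2))
            * (A.2.1 * x n + A.2.2)⁻¹ := by
        rw [mul_assoc, mul_inv_cancel₀ hune, mul_one]
      rw [hW]
      conv_lhs => rw [h5, h3]
    rw [hcf, ← hx0, norm_sub_rev]
    show ‖x 0 - A.1.2 * (A.2.2)⁻¹‖ ≤ _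
    rw [herr, norm_mul, norm_mul, mul_assoc]
    have hxW : ‖x n‖ * ‖Wprod x n‖ = ∏ i ∈ Finset.range (n + 1), ‖x i‖ := by
      rw [norm_Wprod, Finset.prod_range_succ, mul_comm]
    rw [hxW]
    exact mul_le_mul_of_nonneg_right hSnorm (Finset.prod_nonneg fun i _ => norm_nonneg _)
  have h0 : Tendsto (fun n => δ⁻¹ * ∏ i ∈ Finset.range (n + 1), ‖x i‖) atTop (nhds 0) := by
    simpa using hprod.const_mul δ⁻¹
  exact tendsto_iff_norm_sub_tendsto_zero.mpr
    (squeeze_zero (fun n => norm_nonneg _) key h0)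
end

section
/- Let k be a normed division ring (e.g. ℝ, ℂ, or the quaternions). Fix n ≥ 0, digits a_1,…,a_n ∈ k, and x₀ ∈ k, and define the forward orbit x_0 = x₀, x_{i+1} = (x_i)⁻¹ − a_{i+1}; assume x_i ≠ 0 for 0 ≤ i ≤ n−1. Define the backward partial convergents v_n = 0 and v_{i−1} = (v_i + a_i)⁻¹ for i = n, n−1, …, 1, and assume v_i + a_i ≠ 0 for every 1 ≤ i ≤ n (so that all inversions are well-defined). Then ‖v_0 − x_0‖ = (∏_{i=0}^{n} ‖x_i‖)·(∏_{i=0}^{n−1} ‖v_i‖). -/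
/-- Lemma 1.5 (prodIntro) of the paper, in a normed division ring. -/
theorem cf_distance_product {k : Type*} [NormedDivisionRing k]
    (n : ℕ) (a : ℕ → k) (x₀ : k)
    (x : ℕ → k) (hx0 : x 0 = x₀)
    (hstep : ∀ i, x (i + 1) = (x i)⁻¹ - a (i + 1))
    (hxne : ∀ i < n, x i ≠ 0)
    (v : ℕ → k) (hvn : v n = 0)
    (hvstep : ∀ i, 1 ≤ i → i ≤ n → v (i - 1) = (v i + a i)⁻¹)
    (hvne : ∀ i, 1 ≤ i → i ≤ n → v i + a i ≠ 0) :
    ‖v 0 - x 0‖ =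
      (∏ i ∈ Finset.range (n + 1), ‖x i‖) * ∏ i ∈ Finset.range n, ‖v i‖ := by
  induction n generalizing a x₀ x v with
  | zero => simp [hvn]
  | succ n ih =>
    have h1 := ih (fun i => a (i + 1)) (x 1) (fun i => x (i + 1)) rfl
      (fun i => hstep (i + 1)) (fun i hi => hxne (i + 1) (by omega))
      (fun i => v (i + 1)) hvn
      (fun i h1 h2 => by
        have h := hvstep (i + 1) (by omega) (by omega)
        simp only [Nat.add_sub_cancel] at h
        simpa [Nat.sub_add_cancel h1] using h)
      (fun i h1 h2 => hvne (i + 1) (by omega) (by omega))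
    have hx0ne : x 0 ≠ 0 := hxne 0 (by omega)
    have hune : v 1 + a 1 ≠ 0 := hvne 1 le_rfl (by omega)
    have hv0 : v 0 = (v 1 + a 1)⁻¹ := by simpa using hvstep 1 le_rfl (by omega)
    have hw : (x 0)⁻¹ = x 1 + a 1 := by rw [hstep 0]; abel
    have key : v 0 - x 0 = (v 1 + a 1)⁻¹ * (x 1 - v 1) * x 0 := by
      rw [hv0]
      conv_lhs => rw [← inv_inv (x 0)]
      rw [inv_sub_inv' hune (inv_ne_zero hx0ne), inv_inv, hw,
        show x 1 + a 1 - (v 1 + a 1) = x 1 - v 1 by abel]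
    rw [key, norm_mul, norm_mul, norm_sub_rev, h1, ← hv0,
      Finset.prod_range_succ' (fun i => ‖x i‖) (n + 1),
      Finset.prod_range_succ' (fun i => ‖v i‖) n]
    ring
end

section
/- Let k be a normed division ring, n ≥ 1, and a_1,…,a_n ∈ k. Let x₀, y₀ ∈ k with x₀ ≠ y₀, and define the forward orbits x_0 = x₀, x_{i+1} = (x_i)⁻¹ − a_{i+1} and y_0 = y₀, y_{i+1} = (y_i)⁻¹ − a_{i+1}. Assume that for 0 ≤ i ≤ n−1 one has x_i ≠ 0, ‖x_i‖ < 1, and ‖y_i‖ = 1. Then ‖x_n − y_n‖ > ‖x₀ − y₀‖. -/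
lemma inv_sub_inv_eq' {k : Type*} [DivisionRing k] {z w : k} (hz : z ≠ 0) (hw : w ≠ 0) :
    z⁻¹ - w⁻¹ = z⁻¹ * (w - z) * w⁻¹ := by
  rw [mul_sub, sub_mul]
  simp [hz, hw, mul_assoc]

/-- Lemma 3.4 (trapOrbits) of the paper in the division ring setting: if the
orbit of `y₀` stays on the unit sphere while the orbit of `x₀` stays strictly
inside the unit ball, then the distance between the two orbits strictly
increases. -/
theorem cf_orbit_repulsion {k : Type*} [NormedDivisionRing k]
    (n : ℕ) (hn : 1 ≤ n) (a : ℕ → k)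
    (x₀ y₀ : k) (hxy : x₀ ≠ y₀)
    (x y : ℕ → k) (hx0 : x 0 = x₀) (hy0 : y 0 = y₀)
    (hxstep : ∀ i, x (i + 1) = (x i)⁻¹ - a (i + 1))
    (hystep : ∀ i, y (i + 1) = (y i)⁻¹ - a (i + 1))
    (hxne : ∀ i < n, x i ≠ 0) (hxlt : ∀ i < n, ‖x i‖ < 1)
    (hy1 : ∀ i < n, ‖y i‖ = 1) :
    ‖x n - y n‖ > ‖x₀ - y₀‖ := by
  subst hx0 hy0
  have h0 : 0 < ‖x 0 - y 0‖ := by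
    rw [norm_pos_iff, sub_ne_zero]; exact hxy
  have key : ∀ i, i ≤ n → 1 ≤ i → ‖x 0 - y 0‖ < ‖x i - y i‖ := by
    intro i
    induction i with
    | zero => intro _ h; omega
    | succ j ih =>
      intro hle _
      have hj : j < n := by omega
      have hxj := hxne j hj
      have hyj : y j ≠ 0 := by
        intro h; have := hy1 j hj; rw [h] at this; simp at this
      have hstep : ‖x j - y j‖ < ‖x (j+1) - y (j+1)‖ := by
        have hne : x j - y j ≠ 0 := by
          rw [sub_ne_zero]
          intro h
          rcases Nat.eq_zero_or_pos j with h0' | h0'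
          · subst h0'; exact hxy h
          · have := ih (by omega) h0'
            rw [h, sub_self, norm_zero] at this
            exact absurd this (not_lt.mpr (le_of_lt h0))
        have heq : x (j+1) - y (j+1) = (x j)⁻¹ * (y j - x j) * (y j)⁻¹ := by
          rw [hxstep, hystep]
          have := inv_sub_inv_eq' hxj hyj
          rw [sub_sub_sub_cancel_right, this]
        rw [heq, norm_mul, norm_mul, norm_inv, norm_inv, hy1 j hj, inv_one, mul_one]
        have hn1 : ‖y j - x j‖ = ‖x j - y j‖ := by rw [norm_sub_rev]
        rw [hn1]
        have hpos : 0 < ‖x j - y j‖ := norm_pos_iff.mpr hne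
        have h1 : 1 < ‖x j‖⁻¹ := by
          rw [lt_inv_comm₀ one_pos (norm_pos_iff.mpr hxj)]
          simpa using hxlt j hj
        calc ‖x j - y j‖ = 1 * ‖x j - y j‖ := (one_mul _).symm
          _ < ‖x j‖⁻¹ * ‖x j - y j‖ := by
            exact mul_lt_mul_of_pos_right h1 hpos
      rcases Nat.eq_zero_or_pos j with h0' | h0'
      · subst h0'; exact hstep
      · exact lt_trans (ih (by omega) h0') hstep
  exact key n le_rfl hn
end
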